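/- Let N = p + q with p, q ≥ 1, and let W = [W_1 | W_2] and Z = [Z_1 | Z_2] be N×N real orthogonal matrices, where W_1, Z_1 have p columns. Then the subspace distance dist(span{W_1}, span{Z_1}) := ||Z_2^T W_1|| (spectral norm) equals min over X ∈ ℝ^{p×p} of ||W_1 − Z_1 X||. -/

import Mathlib

open Matrix

/-- The spectral (operator 2-)norm of a real matrix. -/
noncomputable def snorm {m n : Type*} [Fintype m] [Fintype n] [DecidableEq n]
    (A : Matrix m n ℝ) : ℝ :=
  ‖LinearMap.toContinuousLinearMap (Matrix.toEuclideanLin A)‖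

section aux

variable {m n k : Type*} [Fintype m] [Fintype n] [Fintype k]
  [DecidableEq m] [DecidableEq n] [DecidableEq k]

local notation "⟪" x ", " y "⟫" => @inner ℝ _ _ x y

lemma teL_mul (A : Matrix m n ℝ) (B : Matrix n k ℝ) (x : EuclideanSpace ℝ k) :
    Matrix.toEuclideanLin (A * B) x =
      Matrix.toEuclideanLin A (Matrix.toEuclideanLin B x) := by
  simp [Matrix.toEuclideanLin_apply, Matrix.mulVec_mulVec]

lemma teL_one (x : EuclideanSpace ℝ n) :
    Matrix.toEuclideanLin (1 : Matrix n n ℝ) x = x := by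
  simp [Matrix.toEuclideanLin_apply]

lemma inner_teL (A : Matrix m n ℝ) (x : EuclideanSpace ℝ n) (y : EuclideanSpace ℝ m) :
    ⟪Matrix.toEuclideanLin A x, y⟫ = ⟪x, Matrix.toEuclideanLin Aᵀ y⟫ := by
  have h : (Aᵀ : Matrix n m ℝ) = Aᴴ := by
    ext i j; simp [Matrix.conjTranspose]
  rw [h, Matrix.toEuclideanLin_conjTranspose_eq_adjoint, LinearMap.adjoint_inner_right]

/-- If `Qᵀ Q = 1`, then `toEuclideanLin Q` is a norm isometry. -/
lemma teL_isometry {Q : Matrix m n ℝ} (hQ : Qᵀ * Q = 1) (x : EuclideanSpace ℝ n) :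
    ‖Matrix.toEuclideanLin Q x‖ = ‖x‖ := by
  have h : ⟪Matrix.toEuclideanLin Q x, Matrix.toEuclideanLin Q x⟫ = ⟪x, x⟫ := by
    rw [inner_teL, ← teL_mul, hQ, teL_one]
  have h1 := real_inner_self_eq_norm_sq (Matrix.toEuclideanLin Q x)
  have h2 := real_inner_self_eq_norm_sq x
  nlinarith [norm_nonneg (Matrix.toEuclideanLin Q x), norm_nonneg x]

/-- If `Z₁ Z₁ᵀ + Z₂ Z₂ᵀ = 1`, then `toEuclideanLin Z₂ᵀ` is a contraction. -/
lemma teL_contraction {Z₁ : Matrix m n ℝ} {Z₂ : Matrix m k ℝ}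
    (h : Z₁ * Z₁ᵀ + Z₂ * Z₂ᵀ = 1) (v : EuclideanSpace ℝ m) :
    ‖Matrix.toEuclideanLin Z₂ᵀ v‖ ≤ ‖v‖ := by
  have h2 : ⟪Matrix.toEuclideanLin Z₂ᵀ v, Matrix.toEuclideanLin Z₂ᵀ v⟫
      + ⟪Matrix.toEuclideanLin Z₁ᵀ v, Matrix.toEuclideanLin Z₁ᵀ v⟫ = ⟪v, v⟫ := by
    rw [inner_teL, inner_teL, Matrix.transpose_transpose, Matrix.transpose_transpose,
      ← teL_mul, ← teL_mul]
    rw [← inner_add_right, ← LinearMap.add_apply, ← map_add, add_comm (Z₂ * Z₂ᵀ) (Z₁ * Z₁ᵀ)] at *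
    rw [h, teL_one]
  have h1 := real_inner_self_eq_norm_sq (Matrix.toEuclideanLin Z₂ᵀ v)
  have h3 := real_inner_self_eq_norm_sq (Matrix.toEuclideanLin Z₁ᵀ v)
  have h4 := real_inner_self_eq_norm_sq v
  nlinarith [norm_nonneg (Matrix.toEuclideanLin Z₂ᵀ v), norm_nonneg v,
    sq_nonneg ‖Matrix.toEuclideanLin Z₁ᵀ v‖]

lemma snorm_nonneg (A : Matrix m n ℝ) : 0 ≤ snorm A := norm_nonneg _

lemma snorm_apply_le (A : Matrix m n ℝ) (x : EuclideanSpace ℝ n) :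
    ‖Matrix.toEuclideanLin A x‖ ≤ snorm A * ‖x‖ := by
  have := (LinearMap.toContinuousLinearMap (Matrix.toEuclideanLin A)).le_opNorm x
  simpa [snorm] using this

lemma snorm_le_bound (A : Matrix m n ℝ) (M : ℝ) (hM : 0 ≤ M)
    (h : ∀ x : EuclideanSpace ℝ n, ‖Matrix.toEuclideanLin A x‖ ≤ M * ‖x‖) :
    snorm A ≤ M := by
  refine ContinuousLinearMap.opNorm_le_bound _ hM fun x => ?_
  simpa using h x

/-- `snorm (Q * A) = snorm A` when `Qᵀ Q = 1`. -/
lemma snorm_isometry_mul {Q : Matrix m n ℝ} (hQ : Qᵀ * Q = 1) (A : Matrix n k ℝ) :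
    snorm (Q * A) = snorm A := by
  apply le_antisymm
  · refine snorm_le_bound _ _ (snorm_nonneg A) fun x => ?_
    rw [teL_mul, teL_isometry hQ]
    exact snorm_apply_le A x
  · refine snorm_le_bound _ _ (snorm_nonneg (Q * A)) fun x => ?_
    rw [← teL_isometry hQ (Matrix.toEuclideanLin A x), ← teL_mul]
    exact snorm_apply_le (Q * A) x

lemma snorm_contraction_mul {Z₁ : Matrix m n ℝ} {Z₂ : Matrix m k ℝ}
    (h : Z₁ * Z₁ᵀ + Z₂ * Z₂ᵀ = 1) (A : Matrix m n ℝ) :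
    snorm (Z₂ᵀ * A) ≤ snorm A := by
  refine snorm_le_bound _ _ (snorm_nonneg A) fun x => ?_
  rw [teL_mul]
  exact le_trans (teL_contraction h _) (snorm_apply_le A x)

end aux

/-- for orthogonal `W = [W₁|W₂]`, `Z = [Z₁|Z₂]` of size `N = p + q`,
the subspace distance `‖Z₂ᵀ W₁‖` is the minimum of `‖W₁ − Z₁ X‖` over all
`X ∈ ℝ^{p×p}`. -/
theorem dist_eq_min
    (p q : ℕ) (hp : 1 ≤ p) (hq : 1 ≤ q)
    (W₁ Z₁ : Matrix (Fin p ⊕ Fin q) (Fin p) ℝ)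
    (W₂ Z₂ : Matrix (Fin p ⊕ Fin q) (Fin q) ℝ)
    (hW : (Matrix.fromCols W₁ W₂)ᵀ * Matrix.fromCols W₁ W₂ = 1)
    (hZ : (Matrix.fromCols Z₁ Z₂)ᵀ * Matrix.fromCols Z₁ Z₂ = 1) :
    IsLeast (Set.range fun X : Matrix (Fin p) (Fin p) ℝ => snorm (W₁ - Z₁ * X))
      (snorm (Z₂ᵀ * W₁)) := by
  -- block structure of hZ
  have hZblocks : Matrix.fromBlocks (Z₁ᵀ * Z₁) (Z₁ᵀ * Z₂) (Z₂ᵀ * Z₁) (Z₂ᵀ * Z₂)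
      = Matrix.fromBlocks 1 0 0 1 := by
    rw [← Matrix.fromRows_mul_fromCols, ← Matrix.transpose_fromCols, hZ,
      Matrix.fromBlocks_one]
  rw [Matrix.fromBlocks_inj] at hZblocks
  obtain ⟨hZ11, hZ12, hZ21, hZ22⟩ := hZblocks
  -- Z Zᵀ = 1
  have hZZt : Z₁ * Z₁ᵀ + Z₂ * Z₂ᵀ = 1 := by
    have := mul_eq_one_comm.mp hZ
    rwa [Matrix.transpose_fromCols, Matrix.fromCols_mul_fromRows] at this
  constructor
  · -- attained at X = Z₁ᵀ W₁
    refine ⟨Z₁ᵀ * W₁, ?_⟩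
    have key : W₁ - Z₁ * (Z₁ᵀ * W₁) = Z₂ * (Z₂ᵀ * W₁) := by
      have := congrArg (· * W₁) hZZt
      simp only [Matrix.add_mul, Matrix.one_mul, Matrix.mul_assoc] at this
      rw [sub_eq_iff_eq_add]
      exact this.symm.trans (add_comm _ _)
    show snorm (W₁ - Z₁ * (Z₁ᵀ * W₁)) = snorm (Z₂ᵀ * W₁)
    rw [key, snorm_isometry_mul hZ22]
  · -- lower bound
    rintro s ⟨X, rfl⟩
    have key : Z₂ᵀ * (W₁ - Z₁ * X) = Z₂ᵀ * W₁ := by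
      rw [Matrix.mul_sub, ← Matrix.mul_assoc, hZ21, Matrix.zero_mul, sub_zero]
    calc snorm (Z₂ᵀ * W₁) = snorm (Z₂ᵀ * (W₁ - Z₁ * X)) := by rw [key]
      _ ≤ snorm (W₁ - Z₁ * X) := snorm_contraction_mul hZZt _
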